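/- The diagonal crossed product A ⋈ H is an associative algebra with unit 1_A ⊗ 1_H, where the multiplication on A ⊗ H is (φ ⋈ h)(φ' ⋈ h') = φ(h₁·φ'·S⁻¹(h₃)) ⋈ h₂h'. -/

import Mathlib

open scoped TensorProduct
open Finset

section Helpers

theorem sum_reindex {γ : Type*} {ι : Type*} (d : γ) (s : Finset ι) (F : ι → γ) :
    ∃ (t : Finset ℕ) (G : ℕ → γ), ∀ {M : Type} [AddCommMonoid M] (Ψ : γ → M),
      ∑ i ∈ s, Ψ (F i) = ∑ j ∈ t, Ψ (G j) := by
  classical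
  induction s using Finset.induction_on with
  | empty => exact ⟨∅, fun _ => d, by intro M _ Ψ; simp⟩
  | insert a s' ha ih =>
    obtain ⟨t, G, hG⟩ := ih
    have hn : t.sup id + 1 ∉ t := by
      intro hc
      have := Finset.le_sup (f := id) hc
      simp only [id] at this; omega
    refine ⟨insert (t.sup id + 1) t, Function.update G (t.sup id + 1) (F a), ?_⟩
    intro M _ Ψ
    rw [Finset.sum_insert ha, Finset.sum_insert hn, hG Ψ, Function.update_self]
    congr 1
    refine Finset.sum_congr rfl fun j hj => ?_
    rw [Function.update_of_ne (by rintro rfl; exact hn hj)]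

variable {k : Type} [Field k] {C : Type} [AddCommGroup C] [Module k C] [Coalgebra k C]

theorem repr_counit_right {a : C} {ι : Type*} (ρ : Coalgebra.Repr k a ι) :
    ∑ i ∈ ρ.index, Coalgebra.counit (R := k) (ρ.right i) • ρ.left i = a := by
  have h := Coalgebra.sum_tmul_counit_eq ρ
  have h2 := congrArg (TensorProduct.rid k C) h
  simp only [map_sum, TensorProduct.rid_tmul, one_smul] at h2
  exact h2

theorem repr_counit_left {a : C} {ι : Type*} (ρ : Coalgebra.Repr k a ι) :
    ∑ i ∈ ρ.index, Coalgebra.counit (R := k) (ρ.left i) • ρ.right i = a := by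
  have h := Coalgebra.sum_counit_tmul_eq ρ
  have h2 := congrArg (TensorProduct.lid k C) h
  simp only [map_sum, TensorProduct.lid_tmul, one_smul] at h2
  exact h2

end Helpers
section Conv

variable {k : Type} [Field k]

/-- Convolution product of linear maps from a coalgebra to an algebra. -/
noncomputable def conv {C B : Type} [AddCommGroup C] [Module k C] [Coalgebra k C]
    [Ring B] [Algebra k B] (f g : C →ₗ[k] B) : C →ₗ[k] B :=
  LinearMap.mul' k B ∘ₗ TensorProduct.map f g ∘ₗ Coalgebra.comul

/-- Convolution unit. -/
noncomputable def cunit {C B : Type} [AddCommGroup C] [Module k C] [Coalgebra k C]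
    [Ring B] [Algebra k B] : C →ₗ[k] B :=
  Algebra.linearMap k B ∘ₗ Coalgebra.counit

variable {C B : Type} [AddCommGroup C] [Module k C] [Coalgebra k C] [Ring B] [Algebra k B]

theorem conv_repr (f g : C →ₗ[k] B) {x : C} {ι : Type*} (ρ : Coalgebra.Repr k x ι) :
    conv f g x = ∑ i ∈ ρ.index, f (ρ.left i) * g (ρ.right i) := by
  simp only [conv, LinearMap.comp_apply, ← ρ.eq, map_sum, TensorProduct.map_tmul,
    LinearMap.mul'_apply]

theorem conv_cunit_left (f : C →ₗ[k] B) : conv (cunit (k := k)) f = f := by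
  ext x
  rw [conv_repr _ _ (Coalgebra.Repr.arbitrary k x)]
  calc ∑ i ∈ (Coalgebra.Repr.arbitrary k x).index,
        cunit (k := k) ((Coalgebra.Repr.arbitrary k x).left i) *
          f ((Coalgebra.Repr.arbitrary k x).right i)
      = ∑ i ∈ (Coalgebra.Repr.arbitrary k x).index,
          Coalgebra.counit (R := k) ((Coalgebra.Repr.arbitrary k x).left i) •
            f ((Coalgebra.Repr.arbitrary k x).right i) := by
        refine Finset.sum_congr rfl fun i _ => ?_
        simp [cunit, Algebra.smul_def]
    _ = f x := by
        rw [show ∀ (t : Finset _) (c : _ → k) (y : _ → C),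
            (∑ i ∈ t, c i • f (y i)) = f (∑ i ∈ t, c i • y i) from
          fun t c y => by rw [map_sum]; exact Finset.sum_congr rfl fun i _ => (map_smul f _ _).symm]
        rw [repr_counit_left (Coalgebra.Repr.arbitrary k x)]

theorem conv_cunit_right (f : C →ₗ[k] B) : conv f (cunit (k := k)) = f := by
  ext x
  rw [conv_repr _ _ (Coalgebra.Repr.arbitrary k x)]
  calc ∑ i ∈ (Coalgebra.Repr.arbitrary k x).index,
        f ((Coalgebra.Repr.arbitrary k x).left i) *
          cunit (k := k) ((Coalgebra.Repr.arbitrary k x).right i)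
      = ∑ i ∈ (Coalgebra.Repr.arbitrary k x).index,
          Coalgebra.counit (R := k) ((Coalgebra.Repr.arbitrary k x).right i) •
            f ((Coalgebra.Repr.arbitrary k x).left i) := by
        refine Finset.sum_congr rfl fun i _ => ?_
        rw [cunit]
        simp only [LinearMap.comp_apply, Algebra.linearMap_apply, Algebra.smul_def]
        exact (Algebra.commutes _ _).symm
    _ = f x := by
        rw [show ∀ (t : Finset _) (c : _ → k) (y : _ → C),
            (∑ i ∈ t, c i • f (y i)) = f (∑ i ∈ t, c i • y i) from
          fun t c y => by rw [map_sum]; exact Finset.sum_congr rfl fun i _ => (map_smul f _ _).symm]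
        rw [repr_counit_right (Coalgebra.Repr.arbitrary k x)]

theorem conv_assoc (f g e : C →ₗ[k] B) : conv (conv f g) e = conv f (conv g e) := by
  ext x
  set ρ := Coalgebra.Repr.arbitrary k x
  set σ : ∀ i : (C × C), Coalgebra.Repr k (ρ.left i) (C × C) := fun i => Coalgebra.Repr.arbitrary k _
  set τ : ∀ i : (C × C), Coalgebra.Repr k (ρ.right i) (C × C) := fun i => Coalgebra.Repr.arbitrary k _
  have key := Coalgebra.sum_tmul_tmul_eq ρ σ τ
  have key2 := congrArg (LinearMap.mul' k B ∘ₗ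
    TensorProduct.map f (LinearMap.mul' k B ∘ₗ TensorProduct.map g e)) key
  simp only [map_sum, LinearMap.comp_apply, TensorProduct.map_tmul,
    LinearMap.mul'_apply] at key2
  rw [conv_repr (conv f g) e ρ, conv_repr f (conv g e) ρ]
  calc ∑ i ∈ ρ.index, conv f g (ρ.left i) * e (ρ.right i)
      = ∑ i ∈ ρ.index, ∑ j ∈ (σ i).index,
          f ((σ i).left j) * (g ((σ i).right j) * e (ρ.right i)) := by
        refine Finset.sum_congr rfl fun i _ => ?_
        rw [conv_repr f g (σ i), Finset.sum_mul]
        exact Finset.sum_congr rfl fun j _ => (mul_assoc _ _ _)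
    _ = ∑ i ∈ ρ.index, ∑ j ∈ (τ i).index,
          f (ρ.left i) * (g ((τ i).left j) * e ((τ i).right j)) := key2
    _ = ∑ i ∈ ρ.index, f (ρ.left i) * conv g e (ρ.right i) := by
        refine Finset.sum_congr rfl fun i _ => ?_
        rw [conv_repr g e (τ i), Finset.mul_sum]

theorem conv_unique (f m g : C →ₗ[k] B) (h1 : conv f m = cunit (k := k))
    (h2 : conv m g = cunit (k := k)) : f = g := by
  have : conv f (conv m g) = conv (conv f m) g := (conv_assoc f m g).symm
  rw [h1, h2, conv_cunit_right, conv_cunit_left] at this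
  exact this

end Conv
section Antipode

variable {k : Type} [Field k] {H : Type} [Ring H] [HopfAlgebra k H]

local notation "𝒮" => HopfAlgebra.antipode (R := k) (A := H)

theorem counit_antipode (h : H) :
    Coalgebra.counit (R := k) (𝒮 h) = Coalgebra.counit (R := k) h := by
  set ρ := Coalgebra.Repr.arbitrary k h
  have key := congrArg (Coalgebra.counit (R := k)) (HopfAlgebra.sum_antipode_mul_eq_algebraMap_counit ρ)
  rw [map_sum] at key
  simp only [Bialgebra.counit_mul] at key
  have : ∑ i ∈ ρ.index, Coalgebra.counit (R := k) (𝒮 (ρ.left i)) *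
      Coalgebra.counit (R := k) (ρ.right i)
      = Coalgebra.counit (R := k) (𝒮 h) := by
    rw [show (𝒮 h : H) = 𝒮 (∑ i ∈ ρ.index, Coalgebra.counit (R := k) (ρ.right i) • ρ.left i) by
      rw [repr_counit_right ρ]]
    rw [map_sum, map_sum]
    refine Finset.sum_congr rfl fun i _ => ?_
    rw [map_smul, map_smul, smul_eq_mul, mul_comm]
  rw [this] at key
  rw [key]
  rw [Bialgebra.counit_algebraMap]

theorem antipode_one : (𝒮 (1 : H) : H) = 1 := by
  have := HopfAlgebra.mul_antipode_rTensor_comul_apply (R := k) (1 : H)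
  rw [Bialgebra.comul_one, Algebra.TensorProduct.one_def] at this
  simp only [LinearMap.rTensor_tmul, LinearMap.mul'_apply, mul_one,
    Bialgebra.counit_one, map_one] at this
  exact this

theorem antipode_mul (a b : H) : (𝒮 (a * b) : H) = 𝒮 b * 𝒮 a := by
  -- convolution argument on C = H ⊗ H, B = H
  set m : H ⊗[k] H →ₗ[k] H := LinearMap.mul' k H with hm
  set G : H ⊗[k] H →ₗ[k] H := (𝒮 : H →ₗ[k] H) ∘ₗ m with hG
  set F : H ⊗[k] H →ₗ[k] H :=
    m ∘ₗ TensorProduct.map (𝒮 : H →ₗ[k] H) (𝒮 : H →ₗ[k] H)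
      ∘ₗ (TensorProduct.comm k H H).toLinearMap with hF
  have comul_tmul : ∀ (x y : H), Coalgebra.comul (R := k) (x ⊗ₜ[k] y) =
      TensorProduct.tensorTensorTensorComm k H H H H
        (Coalgebra.comul (R := k) x ⊗ₜ[k] Coalgebra.comul (R := k) y) := by
    intro x y
    rfl
  have counit_tmul : ∀ (x y : H), Coalgebra.counit (R := k) (x ⊗ₜ[k] y) =
      Coalgebra.counit (R := k) x * Coalgebra.counit (R := k) y := by
    intro x y; rw [TensorProduct.counit_tmul, smul_eq_mul, mul_comm]
  have repr_comul_tmul : ∀ (x y : H) (ρx : Coalgebra.Repr k x (H × H)) (ρy : Coalgebra.Repr k y (H × H)),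
      Coalgebra.comul (R := k) (x ⊗ₜ[k] y) =
        ∑ i ∈ ρx.index, ∑ j ∈ ρy.index,
          (ρx.left i ⊗ₜ[k] ρy.left j) ⊗ₜ[k] (ρx.right i ⊗ₜ[k] ρy.right j) := by
    intro x y ρx ρy
    rw [comul_tmul, ← ρx.eq, ← ρy.eq, TensorProduct.sum_tmul, map_sum]
    refine Finset.sum_congr rfl fun i _ => ?_
    rw [TensorProduct.tmul_sum, map_sum]
    refine Finset.sum_congr rfl fun j _ => ?_
    rw [TensorProduct.tensorTensorTensorComm_tmul]
  have claim1 : conv G m = cunit (k := k) := by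
    apply TensorProduct.ext'
    intro x y
    set ρx := Coalgebra.Repr.arbitrary k x
    set ρy := Coalgebra.Repr.arbitrary k y
    have hrep : Coalgebra.comul (R := k) (x * y) =
        ∑ i ∈ ρx.index, ∑ j ∈ ρy.index,
          (ρx.left i * ρy.left j) ⊗ₜ[k] (ρx.right i * ρy.right j) := by
      rw [Bialgebra.comul_mul, ← ρx.eq, ← ρy.eq, Finset.sum_mul_sum]
      refine Finset.sum_congr rfl fun i _ => Finset.sum_congr rfl fun j _ => ?_
      rw [Algebra.TensorProduct.tmul_mul_tmul]
    have hax := HopfAlgebra.mul_antipode_rTensor_comul_apply (R := k) (x * y)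
    rw [hrep] at hax
    simp only [map_sum, LinearMap.rTensor_tmul, LinearMap.mul'_apply] at hax
    have : conv G m (x ⊗ₜ[k] y) = ∑ i ∈ ρx.index, ∑ j ∈ ρy.index,
        𝒮 (ρx.left i * ρy.left j) * (ρx.right i * ρy.right j) := by
      rw [conv, LinearMap.comp_apply, LinearMap.comp_apply, repr_comul_tmul x y ρx ρy]
      simp only [map_sum, TensorProduct.map_tmul, LinearMap.mul'_apply, hG, hm,
        LinearMap.comp_apply, Algebra.TensorProduct.tmul_mul_tmul]
    rw [this, hax]
    simp only [cunit, LinearMap.comp_apply, Algebra.linearMap_apply, counit_tmul,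
      map_mul, Bialgebra.counit_mul]
  have claim2 : conv m F = cunit (k := k) := by
    apply TensorProduct.ext'
    intro x y
    set ρx := Coalgebra.Repr.arbitrary k x
    set ρy := Coalgebra.Repr.arbitrary k y
    have : conv m F (x ⊗ₜ[k] y) = ∑ i ∈ ρx.index, ∑ j ∈ ρy.index,
        (ρx.left i * ρy.left j) * (𝒮 (ρy.right j) * 𝒮 (ρx.right i)) := by
      rw [conv, LinearMap.comp_apply, LinearMap.comp_apply, repr_comul_tmul x y ρx ρy]
      simp only [map_sum, TensorProduct.map_tmul, LinearMap.mul'_apply, hF, hm,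
        LinearMap.comp_apply, LinearEquiv.coe_coe, TensorProduct.comm_tmul]
    rw [this]
    have inner : ∀ i ∈ ρx.index, ∑ j ∈ ρy.index,
        (ρx.left i * ρy.left j) * (𝒮 (ρy.right j) * 𝒮 (ρx.right i))
        = Coalgebra.counit (R := k) y • (ρx.left i * 𝒮 (ρx.right i)) := by
      intro i _
      have hb := HopfAlgebra.sum_mul_antipode_eq_smul ρy
      calc ∑ j ∈ ρy.index, (ρx.left i * ρy.left j) * (𝒮 (ρy.right j) * 𝒮 (ρx.right i))
          = ∑ j ∈ ρy.index,
              ρx.left i * (ρy.left j * 𝒮 (ρy.right j)) * 𝒮 (ρx.right i) := by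
            refine Finset.sum_congr rfl fun j _ => by
              simp only [mul_assoc]
        _ = ρx.left i * (∑ j ∈ ρy.index, ρy.left j * 𝒮 (ρy.right j)) * 𝒮 (ρx.right i) := by
            rw [Finset.mul_sum, Finset.sum_mul]
        _ = Coalgebra.counit (R := k) y • (ρx.left i * 𝒮 (ρx.right i)) := by
            rw [hb]; rw [mul_smul_comm, smul_mul_assoc, mul_one]
    rw [Finset.sum_congr rfl inner, ← Finset.smul_sum,
      HopfAlgebra.sum_mul_antipode_eq_smul ρx]
    simp only [cunit, LinearMap.comp_apply, Algebra.linearMap_apply, counit_tmul,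
      Algebra.smul_def, map_mul, smul_smul]
    rw [mul_one]
    exact Algebra.commutes _ _
  have := conv_unique G m F claim1 claim2
  have := congrArg (fun f : H ⊗[k] H →ₗ[k] H => f (a ⊗ₜ[k] b)) this
  simpa [hG, hF, hm] using this

end Antipode
section ComulAntipode

variable {k : Type} [Field k] {H : Type} [Ring H] [HopfAlgebra k H]

local notation "𝒮" => HopfAlgebra.antipode (R := k) (A := H)

theorem comm_mapSS (w : H ⊗[k] H) :
    TensorProduct.comm k H H (TensorProduct.map (𝒮 : H →ₗ[k] H) (𝒮 : H →ₗ[k] H) w) =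
      TensorProduct.map (𝒮 : H →ₗ[k] H) (𝒮 : H →ₗ[k] H) (TensorProduct.comm k H H w) := by
  induction w using TensorProduct.induction_on with
  | zero => simp
  | tmul x y => simp
  | add x y hx hy => simp [map_add, hx, hy]

theorem comul_antipode (a : H) :
    Coalgebra.comul (R := k) (𝒮 a) =
      TensorProduct.map (𝒮 : H →ₗ[k] H) (𝒮 : H →ₗ[k] H)
        (TensorProduct.comm k H H (Coalgebra.comul (R := k) a)) := by
  set D : H →ₗ[k] H ⊗[k] H := Coalgebra.comul (R := k) with hD
  set G : H →ₗ[k] H ⊗[k] H := D ∘ₗ (𝒮 : H →ₗ[k] H) with hGdef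
  set F : H →ₗ[k] H ⊗[k] H :=
    TensorProduct.map (𝒮 : H →ₗ[k] H) (𝒮 : H →ₗ[k] H)
      ∘ₗ (TensorProduct.comm k H H).toLinearMap ∘ₗ D with hFdef
  have claim1 : conv D G = cunit (k := k) := by
    ext x
    set ρ := Coalgebra.Repr.arbitrary k x
    rw [conv_repr D G ρ]
    have : ∑ i ∈ ρ.index, D (ρ.left i) * G (ρ.right i)
        = D (∑ i ∈ ρ.index, ρ.left i * 𝒮 (ρ.right i)) := by
      rw [map_sum]
      refine Finset.sum_congr rfl fun i _ => ?_
      rw [hGdef, hD]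
      simp only [LinearMap.comp_apply]
      rw [Bialgebra.comul_mul]
    rw [this, HopfAlgebra.sum_mul_antipode_eq_smul ρ, map_smul, hD, Bialgebra.comul_one]
    simp only [cunit, LinearMap.comp_apply, Algebra.linearMap_apply, Algebra.algebraMap_eq_smul_one]
  -- the hard claim
  have claim2 : conv F D = cunit (k := k) := by
    ext x
    -- Θ₁ and Θ₂
    set Θ₁ : H ⊗[k] (H ⊗[k] H) →ₗ[k] H ⊗[k] H :=
      LinearMap.mul' k (H ⊗[k] H) ∘ₗ TensorProduct.map F LinearMap.id with hT1
    set Θ₂ : (H ⊗[k] H) ⊗[k] H →ₗ[k] H ⊗[k] H :=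
      Θ₁ ∘ₗ (TensorProduct.assoc k H H H).toLinearMap with hT2
    -- key evaluation lemma
    have key : ∀ (b c : H), Θ₂ (Coalgebra.comul (R := k) b ⊗ₜ[k] c) = 1 ⊗ₜ[k] (𝒮 b * c) := by
      intro b c
      set Λ₂ : (H ⊗[k] H) ⊗[k] H →ₗ[k] H ⊗[k] H :=
        LinearMap.mul' k (H ⊗[k] H) ∘ₗ
          TensorProduct.map
            (TensorProduct.map (𝒮 : H →ₗ[k] H) (𝒮 : H →ₗ[k] H)
              ∘ₗ (TensorProduct.comm k H H).toLinearMap)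
            ((TensorProduct.mk k H H).flip c) with hL2
      have lam : ∀ (x y : H), Θ₂ ((x ⊗ₜ[k] y) ⊗ₜ[k] c)
          = Λ₂ ((Coalgebra.comul (R := k) x) ⊗ₜ[k] y) := by
        intro x y
        rw [hT2, hL2, hT1]
        simp only [LinearMap.comp_apply, LinearEquiv.coe_coe, TensorProduct.assoc_tmul,
          TensorProduct.map_tmul, LinearMap.id_coe, id_eq, LinearMap.mul'_apply, hFdef,
          TensorProduct.mk_apply, LinearMap.flip_apply, hD]
      -- evaluate Θ₂ (Δ b ⊗ c) via coassociativity
      set β := Coalgebra.Repr.arbitrary k b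
      set κ : ∀ j : (H × H), Coalgebra.Repr k (β.right j) (H × H) := fun j => Coalgebra.Repr.arbitrary k _
      have e0 : Θ₂ (Coalgebra.comul (R := k) b ⊗ₜ[k] c)
          = Λ₂ (LinearMap.rTensor H (Coalgebra.comul (R := k)) (Coalgebra.comul (R := k) b)) := by
        conv_lhs => rw [← β.eq]
        conv_rhs => rw [← β.eq]
        rw [TensorProduct.sum_tmul, map_sum, map_sum, map_sum]
        refine Finset.sum_congr rfl fun j _ => ?_
        rw [LinearMap.rTensor_tmul]
        exact lam _ _
      rw [e0, ← Coalgebra.coassoc_symm_apply (R := k) b]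
      -- now expand lTensor comul (comul b)
      have e1 : LinearMap.lTensor H (Coalgebra.comul (R := k)) (Coalgebra.comul (R := k) b)
          = ∑ j ∈ β.index, ∑ m ∈ (κ j).index,
              β.left j ⊗ₜ[k] ((κ j).left m ⊗ₜ[k] (κ j).right m) := by
        rw [← β.eq, map_sum]
        refine Finset.sum_congr rfl fun j _ => ?_
        rw [LinearMap.lTensor_tmul, ← (κ j).eq, TensorProduct.tmul_sum]
      rw [e1, map_sum, map_sum]
      have e2 : ∀ j ∈ β.index, Λ₂ ((TensorProduct.assoc k H H H).symm
            (∑ m ∈ (κ j).index, β.left j ⊗ₜ[k] ((κ j).left m ⊗ₜ[k] (κ j).right m)))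
          = Coalgebra.counit (R := k) (β.right j) • ((1 : H) ⊗ₜ[k] (𝒮 (β.left j) * c)) := by
        intro j _
        rw [map_sum, map_sum]
        have : ∀ m ∈ (κ j).index,
            Λ₂ ((TensorProduct.assoc k H H H).symm
              (β.left j ⊗ₜ[k] ((κ j).left m ⊗ₜ[k] (κ j).right m)))
            = (𝒮 ((κ j).left m) * (κ j).right m) ⊗ₜ[k] (𝒮 (β.left j) * c) := by
          intro m _
          rw [TensorProduct.assoc_symm_tmul, hL2]
          simp only [LinearMap.comp_apply, TensorProduct.map_tmul, LinearEquiv.coe_coe,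
            TensorProduct.comm_tmul, LinearMap.mul'_apply, TensorProduct.mk_apply,
            LinearMap.flip_apply, Algebra.TensorProduct.tmul_mul_tmul]
        rw [Finset.sum_congr rfl this, ← TensorProduct.sum_tmul,
          HopfAlgebra.sum_antipode_mul_eq_smul (κ j), TensorProduct.smul_tmul']
      rw [Finset.sum_congr rfl e2]
      have : ∑ j ∈ β.index, Coalgebra.counit (R := k) (β.right j) •
          ((1 : H) ⊗ₜ[k] (𝒮 (β.left j) * c)) = (1 : H) ⊗ₜ[k] (𝒮 b * c) := by
        conv_rhs => rw [← repr_counit_right β]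
        simp only [map_sum, map_smul, Finset.sum_mul, TensorProduct.tmul_sum,
          smul_mul_assoc, TensorProduct.tmul_smul]
      rw [this]
    -- main computation
    set ρ := Coalgebra.Repr.arbitrary k x
    have main : conv F D x = ∑ i ∈ ρ.index,
        Θ₂ (Coalgebra.comul (R := k) (ρ.left i) ⊗ₜ[k] ρ.right i) := by
      have expand : conv F D x = Θ₁ (LinearMap.lTensor H (Coalgebra.comul (R := k))
          (Coalgebra.comul (R := k) x)) := by
        rw [conv_repr F D ρ]
        conv_rhs => rw [← ρ.eq]
        simp only [map_sum]
        refine Finset.sum_congr rfl fun i _ => ?_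
        rw [LinearMap.lTensor_tmul, hT1]
        simp only [LinearMap.comp_apply, TensorProduct.map_tmul, LinearMap.id_coe, id_eq,
          LinearMap.mul'_apply, hD]
      rw [expand, ← Coalgebra.coassoc_apply (R := k) x]
      conv_lhs => rw [← ρ.eq]
      simp only [map_sum]
      refine Finset.sum_congr rfl fun i _ => ?_
      rw [LinearMap.rTensor_tmul, hT2]
      rfl
    rw [main, Finset.sum_congr rfl (fun i _ => key (ρ.left i) (ρ.right i)),
      ← TensorProduct.tmul_sum, HopfAlgebra.sum_antipode_mul_eq_smul ρ]
    simp only [cunit, LinearMap.comp_apply, Algebra.linearMap_apply,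
      Algebra.algebraMap_eq_smul_one, Algebra.TensorProduct.one_def, TensorProduct.tmul_smul]
  have final := conv_unique F D G claim2 claim1
  have := congrArg (fun f : H →ₗ[k] H ⊗[k] H => f a) final
  simp only [hFdef, hGdef, LinearMap.comp_apply, LinearEquiv.coe_coe] at this
  exact this.symm

end ComulAntipode
section Sinv

variable {k : Type} [Field k] {H : Type} [Ring H] [HopfAlgebra k H]

local notation "𝒮" => HopfAlgebra.antipode (R := k) (A := H)

variable (Sinv : H →ₗ[k] H)

theorem Sinv_one (h1 : ∀ h : H, Sinv (𝒮 h) = h) : Sinv 1 = 1 := by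
  have := h1 1; rwa [antipode_one] at this

theorem counit_Sinv (h2 : ∀ h : H, (𝒮 (Sinv h) : H) = h) (x : H) :
    Coalgebra.counit (R := k) (Sinv x) = Coalgebra.counit (R := k) x := by
  conv_rhs => rw [← h2 x]
  rw [counit_antipode]

theorem Sinv_mul (h1 : ∀ h : H, Sinv (𝒮 h) = h) (h2 : ∀ h : H, (𝒮 (Sinv h) : H) = h)
    (u v : H) : Sinv (u * v) = Sinv v * Sinv u := by
  have : u * v = 𝒮 (Sinv v * Sinv u) := by rw [antipode_mul, h2, h2]
  rw [this, h1]

theorem comul_Sinv (h1 : ∀ h : H, Sinv (𝒮 h) = h) (h2 : ∀ h : H, (𝒮 (Sinv h) : H) = h)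
    (c : H) :
    Coalgebra.comul (R := k) (Sinv c) =
      TensorProduct.map Sinv Sinv (TensorProduct.comm k H H (Coalgebra.comul (R := k) c)) := by
  have hca := comul_antipode (k := k) (Sinv c)
  rw [h2 c] at hca
  have key : ∀ w : H ⊗[k] H,
      TensorProduct.map Sinv Sinv (TensorProduct.comm k H H
        (TensorProduct.map (𝒮 : H →ₗ[k] H) (𝒮 : H →ₗ[k] H)
          (TensorProduct.comm k H H w))) = w := by
    intro w
    induction w using TensorProduct.induction_on with
    | zero => simp
    | tmul x y => simp [h1]
    | add x y hx hy => simp only [map_add, hx, hy]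
  have cc : ∀ w : H ⊗[k] H, TensorProduct.comm k H H (TensorProduct.comm k H H w) = w := by
    intro w
    induction w using TensorProduct.induction_on with
    | zero => simp
    | tmul x y => simp
    | add x y hx hy => simp only [map_add, hx, hy]
  calc Coalgebra.comul (R := k) (Sinv c)
      = TensorProduct.map Sinv Sinv (TensorProduct.comm k H H
          (TensorProduct.map (𝒮 : H →ₗ[k] H) (𝒮 : H →ₗ[k] H)
            (TensorProduct.comm k H H (Coalgebra.comul (R := k) (Sinv c)))))
        := (key _).symm
    _ = TensorProduct.map Sinv Sinv (TensorProduct.comm k H H (Coalgebra.comul (R := k) c)) := by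
        rw [hca, ← comm_mapSS, cc]

theorem comul_Sinv_repr (h1 : ∀ h : H, Sinv (𝒮 h) = h)
    (h2 : ∀ h : H, (𝒮 (Sinv h) : H) = h) {c : H} {ι : Type*} (ρ : Coalgebra.Repr k c ι) :
    Coalgebra.comul (R := k) (Sinv c) =
      ∑ i ∈ ρ.index, Sinv (ρ.right i) ⊗ₜ[k] Sinv (ρ.left i) := by
  rw [comul_Sinv Sinv h1 h2 c]
  conv_lhs => rw [← ρ.eq]
  rw [map_sum, map_sum]
  refine Finset.sum_congr rfl fun i _ => ?_
  rw [TensorProduct.comm_tmul, TensorProduct.map_tmul]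

end Sinv
section Coassoc5

variable {k : Type} [Field k] {H : Type} [Ring H] [HopfAlgebra k H]

/-- Multiplicativity of the iterated comultiplication `(id ⊗ Δ) ∘ Δ`. -/
theorem lTcomul_mul (P Q : H ⊗[k] H) :
    LinearMap.lTensor H (Coalgebra.comul (R := k)) (P * Q) =
      LinearMap.lTensor H (Coalgebra.comul (R := k)) P *
        LinearMap.lTensor H (Coalgebra.comul (R := k)) Q := by
  have key : LinearMap.lTensor H (Coalgebra.comul (R := k)) =
      (Algebra.TensorProduct.map (AlgHom.id k H) (Bialgebra.comulAlgHom k H)).toLinearMap := by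
    apply TensorProduct.ext'
    intro x y
    simp [Algebra.TensorProduct.map_tmul, Bialgebra.comulAlgHom_apply]
  rw [key]
  simp only [AlgHom.toLinearMap_apply, map_mul]

theorem coassoc5 {h : H} (ρ : Coalgebra.Repr k h (H × H))
    (π : ∀ i : (H × H), Coalgebra.Repr k (ρ.left i) (H × H))
    (τ : ∀ i : (H × H), Coalgebra.Repr k (ρ.right i) (H × H))
    (σ : ∀ (i : (H × H)) (m : (H × H)), Coalgebra.Repr k ((τ i).left m) (H × H))
    (κ : ∀ (i : (H × H)) (m : (H × H)) (p : (H × H)), Coalgebra.Repr k ((σ i m).right p) (H × H))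
    (θ : ∀ (i : (H × H)) (m : (H × H)), Coalgebra.Repr k ((τ i).right m) (H × H)) :
    (∑ i ∈ ρ.index, ∑ m ∈ (τ i).index, ∑ p ∈ (σ i m).index, ∑ q ∈ (κ i m p).index,
      ρ.left i ⊗ₜ[k] ((σ i m).left p ⊗ₜ[k] ((κ i m p).left q ⊗ₜ[k]
        ((κ i m p).right q ⊗ₜ[k] (τ i).right m))))
    = ∑ i ∈ ρ.index, ∑ w ∈ (π i).index, ∑ m ∈ (τ i).index, ∑ v ∈ (θ i m).index,
      (π i).left w ⊗ₜ[k] ((π i).right w ⊗ₜ[k] ((τ i).left m ⊗ₜ[k]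
        ((θ i m).left v ⊗ₜ[k] (θ i m).right v))) := by
  set D : H →ₗ[k] H ⊗[k] H := Coalgebra.comul (R := k) with hD
  set D2 : H →ₗ[k] H ⊗[k] (H ⊗[k] H) := LinearMap.lTensor H D ∘ₗ D with hD2
  set K : H ⊗[k] H →ₗ[k] H ⊗[k] (H ⊗[k] (H ⊗[k] H)) :=
    LinearMap.lTensor H (TensorProduct.assoc k H H H).toLinearMap ∘ₗ
      (TensorProduct.assoc k H (H ⊗[k] H) H).toLinearMap ∘ₗ LinearMap.rTensor H D2 with hK
  -- naturality lemmas
  have natB : (TensorProduct.assoc k H (H ⊗[k] H) H).toLinearMap ∘ₗ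
      LinearMap.rTensor H (LinearMap.lTensor H D) =
      LinearMap.lTensor H (LinearMap.rTensor H D) ∘ₗ
        (TensorProduct.assoc k H H H).toLinearMap := by
    apply TensorProduct.ext_threefold
    intro x y z
    simp
  have natC : (TensorProduct.assoc k H H (H ⊗[k] (H ⊗[k] H))).toLinearMap ∘ₗ
      LinearMap.lTensor (H ⊗[k] H) D2 =
      LinearMap.lTensor H (LinearMap.lTensor H D2) ∘ₗ
        (TensorProduct.assoc k H H H).toLinearMap := by
    apply TensorProduct.ext_threefold
    intro x y z
    simp
  have cancel : (TensorProduct.assoc k H H H).toLinearMap ∘ₗ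
      (TensorProduct.assoc k H H H).symm.toLinearMap = LinearMap.id := by
    apply LinearMap.ext; intro x; simp
  -- Lemma A : K ∘ D = lTensor D2 ∘ D
  have lemA : K ∘ₗ D = LinearMap.lTensor H D2 ∘ₗ D := by
    have e1 : LinearMap.rTensor H D2 =
        LinearMap.rTensor H (LinearMap.lTensor H D) ∘ₗ LinearMap.rTensor H D := by
      rw [hD2, LinearMap.rTensor_comp]
    have e2 : LinearMap.rTensor H D ∘ₗ D =
        (TensorProduct.assoc k H H H).symm.toLinearMap ∘ₗ LinearMap.lTensor H D ∘ₗ D := by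
      rw [hD, Coalgebra.coassoc_symm]
    calc K ∘ₗ D
        = LinearMap.lTensor H (TensorProduct.assoc k H H H).toLinearMap ∘ₗ
            ((TensorProduct.assoc k H (H ⊗[k] H) H).toLinearMap ∘ₗ
              LinearMap.rTensor H (LinearMap.lTensor H D)) ∘ₗ
            (LinearMap.rTensor H D ∘ₗ D) := by
          rw [hK, e1]; rfl
      _ = LinearMap.lTensor H (TensorProduct.assoc k H H H).toLinearMap ∘ₗ
            (LinearMap.lTensor H (LinearMap.rTensor H D) ∘ₗ
              (TensorProduct.assoc k H H H).toLinearMap) ∘ₗ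
            ((TensorProduct.assoc k H H H).symm.toLinearMap ∘ₗ
              LinearMap.lTensor H D ∘ₗ D) := by
          rw [natB, e2]
      _ = LinearMap.lTensor H (TensorProduct.assoc k H H H).toLinearMap ∘ₗ
            LinearMap.lTensor H (LinearMap.rTensor H D) ∘ₗ
            ((TensorProduct.assoc k H H H).toLinearMap ∘ₗ
              (TensorProduct.assoc k H H H).symm.toLinearMap) ∘ₗ
            LinearMap.lTensor H D ∘ₗ D := by
          simp only [LinearMap.comp_assoc]
      _ = LinearMap.lTensor H (TensorProduct.assoc k H H H).toLinearMap ∘ₗ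
            LinearMap.lTensor H (LinearMap.rTensor H D) ∘ₗ
            LinearMap.lTensor H D ∘ₗ D := by
          rw [cancel]
          simp only [LinearMap.id_comp]
      _ = LinearMap.lTensor H ((TensorProduct.assoc k H H H).toLinearMap ∘ₗ
            LinearMap.rTensor H D ∘ₗ D) ∘ₗ D := by
          rw [LinearMap.lTensor_comp, LinearMap.lTensor_comp]
          simp only [LinearMap.comp_assoc]
      _ = LinearMap.lTensor H (LinearMap.lTensor H D ∘ₗ D) ∘ₗ D := by
          rw [hD, Coalgebra.coassoc]
      _ = LinearMap.lTensor H D2 ∘ₗ D := by rw [hD2]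
  -- Lemma B : the two sides as maps
  have lemB : LinearMap.lTensor H (K ∘ₗ D) ∘ₗ D =
      (TensorProduct.assoc k H H (H ⊗[k] (H ⊗[k] H))).toLinearMap ∘ₗ
        TensorProduct.map D D2 ∘ₗ D := by
    have e3 : TensorProduct.map D D2 =
        LinearMap.lTensor (H ⊗[k] H) D2 ∘ₗ LinearMap.rTensor H D :=
      (LinearMap.lTensor_comp_rTensor _ _ _).symm
    calc LinearMap.lTensor H (K ∘ₗ D) ∘ₗ D
        = LinearMap.lTensor H (LinearMap.lTensor H D2 ∘ₗ D) ∘ₗ D := by rw [lemA]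
      _ = LinearMap.lTensor H (LinearMap.lTensor H D2) ∘ₗ (LinearMap.lTensor H D ∘ₗ D) := by
          rw [LinearMap.lTensor_comp]; simp only [LinearMap.comp_assoc]
      _ = LinearMap.lTensor H (LinearMap.lTensor H D2) ∘ₗ
            ((TensorProduct.assoc k H H H).toLinearMap ∘ₗ LinearMap.rTensor H D ∘ₗ D) := by
          rw [hD, Coalgebra.coassoc]
      _ = (LinearMap.lTensor H (LinearMap.lTensor H D2) ∘ₗ
            (TensorProduct.assoc k H H H).toLinearMap) ∘ₗ LinearMap.rTensor H D ∘ₗ D := by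
          simp only [LinearMap.comp_assoc]
      _ = ((TensorProduct.assoc k H H (H ⊗[k] (H ⊗[k] H))).toLinearMap ∘ₗ
            LinearMap.lTensor (H ⊗[k] H) D2) ∘ₗ LinearMap.rTensor H D ∘ₗ D := by
          rw [natC]
      _ = (TensorProduct.assoc k H H (H ⊗[k] (H ⊗[k] H))).toLinearMap ∘ₗ
            TensorProduct.map D D2 ∘ₗ D := by
          rw [e3]; simp only [LinearMap.comp_assoc]
  -- evaluate LHS
  have evalL : (LinearMap.lTensor H (K ∘ₗ D) ∘ₗ D) h
      = ∑ i ∈ ρ.index, ∑ m ∈ (τ i).index, ∑ p ∈ (σ i m).index, ∑ q ∈ (κ i m p).index,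
          ρ.left i ⊗ₜ[k] ((σ i m).left p ⊗ₜ[k] ((κ i m p).left q ⊗ₜ[k]
            ((κ i m p).right q ⊗ₜ[k] (τ i).right m))) := by
    rw [LinearMap.comp_apply]
    conv_lhs => rw [hD, ← ρ.eq]
    rw [map_sum]
    refine Finset.sum_congr rfl fun i _ => ?_
    rw [LinearMap.lTensor_tmul, LinearMap.comp_apply]
    have : D (ρ.right i) = ∑ m ∈ (τ i).index, (τ i).left m ⊗ₜ[k] (τ i).right m := by
      rw [hD, ← (τ i).eq]
    rw [this, map_sum, TensorProduct.tmul_sum]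
    refine Finset.sum_congr rfl fun m _ => ?_
    have hd2 : D2 ((τ i).left m) = ∑ p ∈ (σ i m).index, ∑ q ∈ (κ i m p).index,
        (σ i m).left p ⊗ₜ[k] ((κ i m p).left q ⊗ₜ[k] (κ i m p).right q) := by
      rw [hD2, LinearMap.comp_apply, hD, ← (σ i m).eq, map_sum]
      refine Finset.sum_congr rfl fun p _ => ?_
      rw [LinearMap.lTensor_tmul, ← (κ i m p).eq, TensorProduct.tmul_sum]
    rw [hK]
    simp only [LinearMap.comp_apply, LinearMap.rTensor_tmul, hd2]
    rw [TensorProduct.sum_tmul, map_sum, map_sum, TensorProduct.tmul_sum]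
    refine Finset.sum_congr rfl fun p _ => ?_
    rw [TensorProduct.sum_tmul, map_sum, map_sum, TensorProduct.tmul_sum]
    refine Finset.sum_congr rfl fun q _ => ?_
    simp only [LinearEquiv.coe_coe, TensorProduct.assoc_tmul, LinearMap.lTensor_tmul]
  -- evaluate RHS
  have evalR : ((TensorProduct.assoc k H H (H ⊗[k] (H ⊗[k] H))).toLinearMap ∘ₗ
        TensorProduct.map D D2 ∘ₗ D) h
      = ∑ i ∈ ρ.index, ∑ w ∈ (π i).index, ∑ m ∈ (τ i).index, ∑ v ∈ (θ i m).index,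
          (π i).left w ⊗ₜ[k] ((π i).right w ⊗ₜ[k] ((τ i).left m ⊗ₜ[k]
            ((θ i m).left v ⊗ₜ[k] (θ i m).right v))) := by
    rw [LinearMap.comp_apply, LinearMap.comp_apply]
    conv_lhs => rw [hD, ← ρ.eq]
    rw [map_sum, map_sum]
    refine Finset.sum_congr rfl fun i _ => ?_
    have hl : D (ρ.left i) = ∑ w ∈ (π i).index, (π i).left w ⊗ₜ[k] (π i).right w := by
      rw [hD, ← (π i).eq]
    have hr : D2 (ρ.right i) = ∑ m ∈ (τ i).index, ∑ v ∈ (θ i m).index,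
        (τ i).left m ⊗ₜ[k] ((θ i m).left v ⊗ₜ[k] (θ i m).right v) := by
      rw [hD2, LinearMap.comp_apply, hD, ← (τ i).eq, map_sum]
      refine Finset.sum_congr rfl fun m _ => ?_
      rw [LinearMap.lTensor_tmul, ← (θ i m).eq, TensorProduct.tmul_sum]
    rw [TensorProduct.map_tmul, hl, hr]
    rw [TensorProduct.sum_tmul, map_sum]
    refine Finset.sum_congr rfl fun w _ => ?_
    rw [TensorProduct.tmul_sum, map_sum]
    refine Finset.sum_congr rfl fun m _ => ?_
    rw [TensorProduct.tmul_sum, map_sum]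
    refine Finset.sum_congr rfl fun v _ => ?_
    simp only [LinearEquiv.coe_coe, TensorProduct.assoc_tmul]
  rw [← evalL, ← evalR, lemB]

end Coassoc5
set_option maxHeartbeats 2000000

/-- the diagonal crossed product `A ⋈ H` of an `H`-bimodule algebra `A`
(for `H` with bijective antipode, with inverse `Sinv`) is an associative algebra with
unit `1 ⊗ 1`. -/
theorem stmt_1 (k H A : Type) [Field k] [Ring H] [HopfAlgebra k H]
    [Ring A] [Algebra k A]
    (l : H →ₗ[k] A →ₗ[k] A)
    (hl_one : ∀ a : A, l 1 a = a)
    (hl_mul : ∀ (h h' : H) (a : A), l (h * h') a = l h (l h' a))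
    (hl_unit : ∀ h : H, l h (1 : A) = Coalgebra.counit (R := k) h • (1 : A))
    (hl_meas : ∀ (h : H) (a b : A) (s : Finset ℕ) (f g : ℕ → H),
      Coalgebra.comul (R := k) h = ∑ i ∈ s, f i ⊗ₜ[k] g i →
      l h (a * b) = ∑ i ∈ s, l (f i) a * l (g i) b)
    (r : H →ₗ[k] A →ₗ[k] A)
    (hr_one : ∀ a : A, r 1 a = a)
    (hr_mul : ∀ (h h' : H) (a : A), r (h * h') a = r h' (r h a))
    (hr_unit : ∀ h : H, r h (1 : A) = Coalgebra.counit (R := k) h • (1 : A))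
    (hr_meas : ∀ (h : H) (a b : A) (s : Finset ℕ) (f g : ℕ → H),
      Coalgebra.comul (R := k) h = ∑ i ∈ s, f i ⊗ₜ[k] g i →
      r h (a * b) = ∑ i ∈ s, r (f i) a * r (g i) b)
    (hcomm : ∀ (h h' : H) (a : A), l h (r h' a) = r h' (l h a))
    (Sinv : H →ₗ[k] H)
    (hSinv1 : ∀ h : H, Sinv (HopfAlgebra.antipode (R := k) h) = h)
    (hSinv2 : ∀ h : H, HopfAlgebra.antipode (R := k) (Sinv h) = h)
    (mul : (A ⊗[k] H) →ₗ[k] (A ⊗[k] H) →ₗ[k] (A ⊗[k] H))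
    (hmul : ∀ (φ φ' : A) (h h' : H) (s : Finset ℕ) (f g e : ℕ → H),
      (TensorProduct.map (LinearMap.id : H →ₗ[k] H) (Coalgebra.comul (R := k))) (Coalgebra.comul (R := k) h) =
        ∑ i ∈ s, f i ⊗ₜ[k] (g i ⊗ₜ[k] e i) →
      mul (φ ⊗ₜ[k] h) (φ' ⊗ₜ[k] h') =
        ∑ i ∈ s, (φ * r (Sinv (e i)) (l (f i) φ')) ⊗ₜ[k] (g i * h'))
    :
    (∀ x y z : A ⊗[k] H, mul (mul x y) z = mul x (mul y z)) ∧
    (∀ x : A ⊗[k] H, mul ((1 : A) ⊗ₜ[k] (1 : H)) x = x) ∧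
    (∀ x : A ⊗[k] H, mul x ((1 : A) ⊗ₜ[k] (1 : H)) = x) := by
  classical
  -- generic-index wrappers
  have hmulG : ∀ (φa φb : A) (ha hb : H) {ι : Type} (s : Finset ι) (f g e : ι → H),
      (TensorProduct.map (LinearMap.id : H →ₗ[k] H) (Coalgebra.comul (R := k)))
          (Coalgebra.comul (R := k) ha) = ∑ i ∈ s, f i ⊗ₜ[k] (g i ⊗ₜ[k] e i) →
      mul (φa ⊗ₜ[k] ha) (φb ⊗ₜ[k] hb) =
        ∑ i ∈ s, (φa * r (Sinv (e i)) (l (f i) φb)) ⊗ₜ[k] (g i * hb) := by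
    intro φa φb ha hb ι s f g e hrep
    obtain ⟨t, G, hG⟩ := sum_reindex ((1 : H), (1 : H), (1 : H)) s (fun i => (f i, g i, e i))
    have h1 := hG (fun z => z.1 ⊗ₜ[k] (z.2.1 ⊗ₜ[k] z.2.2))
    have h2 := hG (fun z => (φa * r (Sinv z.2.2) (l z.1 φb)) ⊗ₜ[k] (z.2.1 * hb))
    rw [h2]
    exact hmul φa φb ha hb t (fun j => (G j).1) (fun j => (G j).2.1) (fun j => (G j).2.2)
      (hrep.trans h1)
  have hlG : ∀ (x : H) (a b : A) {ι : Type} (s : Finset ι) (f g : ι → H),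
      Coalgebra.comul (R := k) x = ∑ i ∈ s, f i ⊗ₜ[k] g i →
      l x (a * b) = ∑ i ∈ s, l (f i) a * l (g i) b := by
    intro x a b ι s f g hrep
    obtain ⟨t, G, hG⟩ := sum_reindex ((1 : H), (1 : H)) s (fun i => (f i, g i))
    have h1 := hG (fun z => z.1 ⊗ₜ[k] z.2)
    have h2 := hG (fun z => l z.1 a * l z.2 b)
    rw [h2]
    exact hl_meas x a b t (fun j => (G j).1) (fun j => (G j).2) (hrep.trans h1)
  have hrG : ∀ (x : H) (a b : A) {ι : Type} (s : Finset ι) (f g : ι → H),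
      Coalgebra.comul (R := k) x = ∑ i ∈ s, f i ⊗ₜ[k] g i →
      r x (a * b) = ∑ i ∈ s, r (f i) a * r (g i) b := by
    intro x a b ι s f g hrep
    obtain ⟨t, G, hG⟩ := sum_reindex ((1 : H), (1 : H)) s (fun i => (f i, g i))
    have h1 := hG (fun z => z.1 ⊗ₜ[k] z.2)
    have h2 := hG (fun z => r z.1 a * r z.2 b)
    rw [h2]
    exact hr_meas x a b t (fun j => (G j).1) (fun j => (G j).2) (hrep.trans h1)
  -- bridge between map id comul and lTensor comul
  have lT_eq : TensorProduct.map (LinearMap.id : H →ₗ[k] H) (Coalgebra.comul (R := k) (A := H)) =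
      LinearMap.lTensor H (Coalgebra.comul (R := k) (A := H)) := by
    apply TensorProduct.ext'
    intro x y
    simp
  have rep2 : ∀ (x : H) (ρx : Coalgebra.Repr.{0,0,0} k x (H × H))
      (τx : ∀ i : (H × H), Coalgebra.Repr.{0,0,0} k (ρx.right i) (H × H)),
      LinearMap.lTensor H (Coalgebra.comul (R := k)) (Coalgebra.comul (R := k) x)
        = ∑ i ∈ ρx.index, ∑ m ∈ (τx i).index,
            ρx.left i ⊗ₜ[k] ((τx i).left m ⊗ₜ[k] (τx i).right m) := by
    intro x ρx τx
    conv_lhs => rw [← ρx.eq]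
    rw [map_sum]
    refine Finset.sum_congr rfl fun i _ => ?_
    rw [LinearMap.lTensor_tmul, ← (τx i).eq, TensorProduct.tmul_sum]
  -- multiplication of two pure tensors via arbitrary two-level representations
  have mulpure : ∀ (φa φb : A) (x hb : H) (ρx : Coalgebra.Repr.{0,0,0} k x (H × H))
      (τx : ∀ i : (H × H), Coalgebra.Repr.{0,0,0} k (ρx.right i) (H × H)),
      mul (φa ⊗ₜ[k] x) (φb ⊗ₜ[k] hb)
        = ∑ i ∈ ρx.index, ∑ m ∈ (τx i).index,
            (φa * r (Sinv ((τx i).right m)) (l (ρx.left i) φb)) ⊗ₜ[k] ((τx i).left m * hb) := by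
    intro φa φb x hb ρx τx
    have hrep : TensorProduct.map (LinearMap.id : H →ₗ[k] H) (Coalgebra.comul (R := k))
        (Coalgebra.comul (R := k) x)
        = ∑ z ∈ ρx.index.sigma (fun i => (τx i).index),
            ρx.left z.1 ⊗ₜ[k] ((τx z.1).left z.2 ⊗ₜ[k] (τx z.1).right z.2) := by
      rw [lT_eq, rep2 x ρx τx, Finset.sum_sigma]
    rw [hmulG φa φb x hb (ρx.index.sigma (fun i => (τx i).index))
      (fun z => ρx.left z.1) (fun z => (τx z.1).left z.2) (fun z => (τx z.1).right z.2) hrep,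
      Finset.sum_sigma]
  refine ⟨?_, ?_, ?_⟩
  · -- associativity
    intro x y z
    induction x using TensorProduct.induction_on with
    | zero => simp
    | add u v hu hv => simp only [map_add, LinearMap.add_apply, hu, hv]
    | tmul φ h =>
      induction y using TensorProduct.induction_on with
      | zero => simp
      | add u v hu hv => simp only [map_add, LinearMap.add_apply, hu, hv]
      | tmul φ' h' =>
        induction z using TensorProduct.induction_on with
        | zero => simp
        | add u v hu hv => simp only [map_add, LinearMap.add_apply, hu, hv]
        | tmul φ'' h'' =>
          -- the core computation
          set ρ : Coalgebra.Repr.{0,0,0} k h (H × H) := Coalgebra.Repr.arbitrary k h with hρ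
          set τ : ∀ i : (H × H), Coalgebra.Repr.{0,0,0} k (ρ.right i) (H × H) :=
            fun i => Coalgebra.Repr.arbitrary k _ with hτ
          set σ : ∀ (i : (H × H)) (m : (H × H)), Coalgebra.Repr.{0,0,0} k ((τ i).left m) (H × H) :=
            fun i m => Coalgebra.Repr.arbitrary k _ with hσ
          set κ : ∀ (i : (H × H)) (m : (H × H)) (p : (H × H)),
              Coalgebra.Repr.{0,0,0} k ((σ i m).right p) (H × H) :=
            fun i m p => Coalgebra.Repr.arbitrary k _ with hκ
          set π : ∀ i : (H × H), Coalgebra.Repr.{0,0,0} k (ρ.left i) (H × H) :=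
            fun i => Coalgebra.Repr.arbitrary k _ with hπ
          set θ : ∀ (i : (H × H)) (m : (H × H)), Coalgebra.Repr.{0,0,0} k ((τ i).right m) (H × H) :=
            fun i m => Coalgebra.Repr.arbitrary k _ with hθ
          set ρ' : Coalgebra.Repr.{0,0,0} k h' (H × H) := Coalgebra.Repr.arbitrary k h' with hρ'
          set τ' : ∀ j : (H × H), Coalgebra.Repr.{0,0,0} k (ρ'.right j) (H × H) :=
            fun j => Coalgebra.Repr.arbitrary k _ with hτ'
          set S₂ : Finset ((_ : (H × H)) × _) := ρ'.index.sigma (fun j => (τ' j).index) with hS₂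
          -- the master multilinear map
          set U : H ⊗[k] H →ₗ[k] A :=
            TensorProduct.lift (((r.comp Sinv).flip).comp (l.flip φ')) with hU
          set V : A → (H ⊗[k] H →ₗ[k] A) := fun XA =>
            TensorProduct.lift (((r.comp Sinv).flip).comp (l.flip XA)) with hV
          set Tm : A → H → ((H ⊗[k] (H ⊗[k] (H ⊗[k] (H ⊗[k] H)))) →ₗ[k] A ⊗[k] H) :=
            fun XA YH =>
              TensorProduct.map ((LinearMap.mulLeft k φ).comp (LinearMap.mul' k A))
                  (LinearMap.mulRight k YH) ∘ₗ
                LinearMap.rTensor H (TensorProduct.map U (V XA)) ∘ₗ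
                LinearMap.rTensor H
                  (TensorProduct.tensorTensorTensorComm k H H H H).toLinearMap ∘ₗ
                (TensorProduct.assoc k (H ⊗[k] H) (H ⊗[k] H) H).symm.toLinearMap ∘ₗ
                LinearMap.lTensor (H ⊗[k] H)
                  (LinearMap.rTensor H (TensorProduct.comm k H H).toLinearMap) ∘ₗ
                LinearMap.lTensor (H ⊗[k] H) (TensorProduct.comm k H (H ⊗[k] H)).toLinearMap ∘ₗ
                (TensorProduct.assoc k H H (H ⊗[k] (H ⊗[k] H))).symm.toLinearMap with hTm
          have Tm_tmul : ∀ (XA : A) (YH : H) (a b c d e : H),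
              Tm XA YH (a ⊗ₜ[k] (b ⊗ₜ[k] (c ⊗ₜ[k] (d ⊗ₜ[k] e))))
                = (φ * (r (Sinv e) (l a φ') * r (Sinv d) (l b XA))) ⊗ₜ[k] (c * YH) := by
            intro XA YH a b c d e
            rw [hTm]
            simp only [LinearMap.comp_apply, LinearEquiv.coe_coe,
              TensorProduct.assoc_symm_tmul, LinearMap.lTensor_tmul, LinearMap.rTensor_tmul,
              TensorProduct.comm_tmul, TensorProduct.tensorTensorTensorComm_tmul,
              TensorProduct.map_tmul, hU, hV, TensorProduct.lift.tmul,
              LinearMap.coe_comp, Function.comp_apply, LinearMap.flip_apply,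
              LinearMap.mul'_apply, LinearMap.mulLeft_apply, LinearMap.mulRight_apply]
          -- left-hand side
          have step1 := mulpure φ φ' h h' ρ τ
          have lhs1 : mul (mul (φ ⊗ₜ[k] h) (φ' ⊗ₜ[k] h')) (φ'' ⊗ₜ[k] h'')
              = ∑ i ∈ ρ.index, ∑ m ∈ (τ i).index,
                  mul ((φ * r (Sinv ((τ i).right m)) (l (ρ.left i) φ'))
                    ⊗ₜ[k] ((τ i).left m * h')) (φ'' ⊗ₜ[k] h'') := by
            rw [step1]
            simp only [map_sum, LinearMap.sum_apply]
          have step3 : ∀ (i : (H × H)) (m : (H × H)),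
              mul ((φ * r (Sinv ((τ i).right m)) (l (ρ.left i) φ'))
                  ⊗ₜ[k] ((τ i).left m * h')) (φ'' ⊗ₜ[k] h'')
              = ∑ zjn ∈ S₂, ∑ zpq ∈ (σ i m).index.sigma (fun p => (κ i m p).index),
                  ((φ * r (Sinv ((τ i).right m)) (l (ρ.left i) φ'))
                    * r (Sinv ((κ i m zpq.1).right zpq.2 * (τ' zjn.1).right zjn.2))
                      (l ((σ i m).left zpq.1 * ρ'.left zjn.1) φ''))
                  ⊗ₜ[k] (((κ i m zpq.1).left zpq.2 * (τ' zjn.1).left zjn.2) * h'') := by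
            intro i m
            set S₁ : Finset ((_ : (H × H)) × _) :=
              (σ i m).index.sigma (fun p => (κ i m p).index) with hS₁
            have A1 : LinearMap.lTensor H (Coalgebra.comul (R := k))
                (Coalgebra.comul (R := k) ((τ i).left m))
                = ∑ zpq ∈ S₁, (σ i m).left zpq.1
                    ⊗ₜ[k] ((κ i m zpq.1).left zpq.2 ⊗ₜ[k] (κ i m zpq.1).right zpq.2) := by
              rw [rep2 _ (σ i m) (κ i m), hS₁, Finset.sum_sigma]
            have A2 : LinearMap.lTensor H (Coalgebra.comul (R := k))
                (Coalgebra.comul (R := k) h')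
                = ∑ zjn ∈ S₂, ρ'.left zjn.1
                    ⊗ₜ[k] ((τ' zjn.1).left zjn.2 ⊗ₜ[k] (τ' zjn.1).right zjn.2) := by
              rw [rep2 _ ρ' τ', hS₂, Finset.sum_sigma]
            have hrep3 : TensorProduct.map (LinearMap.id : H →ₗ[k] H)
                (Coalgebra.comul (R := k)) (Coalgebra.comul (R := k) ((τ i).left m * h'))
                = ∑ y ∈ S₂ ×ˢ S₁,
                    ((σ i m).left y.2.1 * ρ'.left y.1.1)
                    ⊗ₜ[k] (((κ i m y.2.1).left y.2.2 * (τ' y.1.1).left y.1.2)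
                      ⊗ₜ[k] ((κ i m y.2.1).right y.2.2 * (τ' y.1.1).right y.1.2)) := by
              rw [lT_eq, Bialgebra.comul_mul, lTcomul_mul, A1, A2, Finset.sum_mul_sum]
              rw [Finset.sum_comm, Finset.sum_product]
              refine Finset.sum_congr rfl fun zjn _ => Finset.sum_congr rfl fun zpq _ => ?_
              rw [Algebra.TensorProduct.tmul_mul_tmul, Algebra.TensorProduct.tmul_mul_tmul]
            rw [hmulG _ φ'' _ h'' (S₂ ×ˢ S₁)
              (fun y => (σ i m).left y.2.1 * ρ'.left y.1.1)
              (fun y => (κ i m y.2.1).left y.2.2 * (τ' y.1.1).left y.1.2)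
              (fun y => (κ i m y.2.1).right y.2.2 * (τ' y.1.1).right y.1.2) hrep3,
              Finset.sum_product]
          have term4 : ∀ (i : (H × H)) (m : (H × H))
              (zjn : (_ : (H × H)) × _) (zpq : (_ : (H × H)) × _),
              ((φ * r (Sinv ((τ i).right m)) (l (ρ.left i) φ'))
                * r (Sinv ((κ i m zpq.1).right zpq.2 * (τ' zjn.1).right zjn.2))
                  (l ((σ i m).left zpq.1 * ρ'.left zjn.1) φ''))
              ⊗ₜ[k] (((κ i m zpq.1).left zpq.2 * (τ' zjn.1).left zjn.2) * h'')
              = Tm (r (Sinv ((τ' zjn.1).right zjn.2)) (l (ρ'.left zjn.1) φ''))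
                  ((τ' zjn.1).left zjn.2 * h'')
                  (ρ.left i ⊗ₜ[k] ((σ i m).left zpq.1 ⊗ₜ[k] ((κ i m zpq.1).left zpq.2
                    ⊗ₜ[k] ((κ i m zpq.1).right zpq.2 ⊗ₜ[k] (τ i).right m)))) := by
            intro i m zjn zpq
            rw [Tm_tmul]
            conv_lhs => rw [hl_mul, Sinv_mul Sinv hSinv1 hSinv2, hr_mul,
              mul_assoc, mul_assoc]
            conv_rhs => rw [hcomm]
          -- LHS as a sum of Tm applied to the first 5-tensor
          have TL_eval : ∀ (XA : A) (YH : H),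
              Tm XA YH (∑ i ∈ ρ.index, ∑ m ∈ (τ i).index, ∑ p ∈ (σ i m).index,
                ∑ q ∈ (κ i m p).index,
                  ρ.left i ⊗ₜ[k] ((σ i m).left p ⊗ₜ[k] ((κ i m p).left q ⊗ₜ[k]
                    ((κ i m p).right q ⊗ₜ[k] (τ i).right m))))
              = ∑ i ∈ ρ.index, ∑ m ∈ (τ i).index, ∑ p ∈ (σ i m).index, ∑ q ∈ (κ i m p).index,
                  Tm XA YH (ρ.left i ⊗ₜ[k] ((σ i m).left p ⊗ₜ[k] ((κ i m p).left q ⊗ₜ[k]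
                    ((κ i m p).right q ⊗ₜ[k] (τ i).right m)))) := by
            intro XA YH
            simp only [map_sum]
          have TR_eval : ∀ (XA : A) (YH : H),
              Tm XA YH (∑ i ∈ ρ.index, ∑ w ∈ (π i).index, ∑ m ∈ (τ i).index,
                ∑ v ∈ (θ i m).index,
                  (π i).left w ⊗ₜ[k] ((π i).right w ⊗ₜ[k] ((τ i).left m ⊗ₜ[k]
                    ((θ i m).left v ⊗ₜ[k] (θ i m).right v))))
              = ∑ i ∈ ρ.index, ∑ w ∈ (π i).index, ∑ m ∈ (τ i).index, ∑ v ∈ (θ i m).index,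
                  Tm XA YH ((π i).left w ⊗ₜ[k] ((π i).right w ⊗ₜ[k] ((τ i).left m ⊗ₜ[k]
                    ((θ i m).left v ⊗ₜ[k] (θ i m).right v)))) := by
            intro XA YH
            simp only [map_sum]
          have LHS_eq : mul (mul (φ ⊗ₜ[k] h) (φ' ⊗ₜ[k] h')) (φ'' ⊗ₜ[k] h'')
              = ∑ zjn ∈ S₂,
                  Tm (r (Sinv ((τ' zjn.1).right zjn.2)) (l (ρ'.left zjn.1) φ''))
                    ((τ' zjn.1).left zjn.2 * h'')
                    (∑ i ∈ ρ.index, ∑ m ∈ (τ i).index, ∑ p ∈ (σ i m).index,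
                      ∑ q ∈ (κ i m p).index,
                        ρ.left i ⊗ₜ[k] ((σ i m).left p ⊗ₜ[k] ((κ i m p).left q ⊗ₜ[k]
                          ((κ i m p).right q ⊗ₜ[k] (τ i).right m)))) := by
            rw [lhs1]
            calc ∑ i ∈ ρ.index, ∑ m ∈ (τ i).index,
                  mul ((φ * r (Sinv ((τ i).right m)) (l (ρ.left i) φ'))
                    ⊗ₜ[k] ((τ i).left m * h')) (φ'' ⊗ₜ[k] h'')
                = ∑ i ∈ ρ.index, ∑ m ∈ (τ i).index, ∑ zjn ∈ S₂,
                    ∑ zpq ∈ (σ i m).index.sigma (fun p => (κ i m p).index),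
                      ((φ * r (Sinv ((τ i).right m)) (l (ρ.left i) φ'))
                        * r (Sinv ((κ i m zpq.1).right zpq.2 * (τ' zjn.1).right zjn.2))
                          (l ((σ i m).left zpq.1 * ρ'.left zjn.1) φ''))
                      ⊗ₜ[k] (((κ i m zpq.1).left zpq.2 * (τ' zjn.1).left zjn.2) * h'') :=
                  Finset.sum_congr rfl fun i _ => Finset.sum_congr rfl fun m _ => step3 i m
              _ = ∑ i ∈ ρ.index, ∑ zjn ∈ S₂, ∑ m ∈ (τ i).index,
                    ∑ zpq ∈ (σ i m).index.sigma (fun p => (κ i m p).index),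
                      ((φ * r (Sinv ((τ i).right m)) (l (ρ.left i) φ'))
                        * r (Sinv ((κ i m zpq.1).right zpq.2 * (τ' zjn.1).right zjn.2))
                          (l ((σ i m).left zpq.1 * ρ'.left zjn.1) φ''))
                      ⊗ₜ[k] (((κ i m zpq.1).left zpq.2 * (τ' zjn.1).left zjn.2) * h'') :=
                  Finset.sum_congr rfl fun i _ => Finset.sum_comm
              _ = ∑ zjn ∈ S₂, ∑ i ∈ ρ.index, ∑ m ∈ (τ i).index,
                    ∑ zpq ∈ (σ i m).index.sigma (fun p => (κ i m p).index),
                      ((φ * r (Sinv ((τ i).right m)) (l (ρ.left i) φ'))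
                        * r (Sinv ((κ i m zpq.1).right zpq.2 * (τ' zjn.1).right zjn.2))
                          (l ((σ i m).left zpq.1 * ρ'.left zjn.1) φ''))
                      ⊗ₜ[k] (((κ i m zpq.1).left zpq.2 * (τ' zjn.1).left zjn.2) * h'') :=
                  Finset.sum_comm
              _ = _ := ?_
            refine Finset.sum_congr rfl fun zjn _ => ?_
            rw [TL_eval]
            refine Finset.sum_congr rfl fun i _ => Finset.sum_congr rfl fun m _ => ?_
            rw [Finset.sum_sigma]
            refine Finset.sum_congr rfl fun p _ => Finset.sum_congr rfl fun q _ => ?_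
            exact term4 i m zjn ⟨p, q⟩
          -- right-hand side
          have rhs1 : mul (φ ⊗ₜ[k] h) (mul (φ' ⊗ₜ[k] h') (φ'' ⊗ₜ[k] h''))
              = ∑ zjn ∈ S₂,
                  mul (φ ⊗ₜ[k] h)
                    ((φ' * r (Sinv ((τ' zjn.1).right zjn.2)) (l (ρ'.left zjn.1) φ''))
                      ⊗ₜ[k] ((τ' zjn.1).left zjn.2 * h'')) := by
            rw [mulpure φ' φ'' h' h'' ρ' τ', Finset.sum_sigma', map_sum]
          have rhs2 : ∀ zjn ∈ S₂,
              mul (φ ⊗ₜ[k] h)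
                ((φ' * r (Sinv ((τ' zjn.1).right zjn.2)) (l (ρ'.left zjn.1) φ''))
                  ⊗ₜ[k] ((τ' zjn.1).left zjn.2 * h''))
              = ∑ i ∈ ρ.index, ∑ w ∈ (π i).index, ∑ m ∈ (τ i).index, ∑ v ∈ (θ i m).index,
                  Tm (r (Sinv ((τ' zjn.1).right zjn.2)) (l (ρ'.left zjn.1) φ''))
                    ((τ' zjn.1).left zjn.2 * h'')
                    ((π i).left w ⊗ₜ[k] ((π i).right w ⊗ₜ[k] ((τ i).left m ⊗ₜ[k]
                      ((θ i m).left v ⊗ₜ[k] (θ i m).right v)))) := by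
            intro zjn _
            rw [mulpure φ _ h _ ρ τ]
            have inner : ∀ i ∈ ρ.index, ∀ m ∈ (τ i).index,
                (φ * r (Sinv ((τ i).right m)) (l (ρ.left i)
                    (φ' * r (Sinv ((τ' zjn.1).right zjn.2)) (l (ρ'.left zjn.1) φ''))))
                  ⊗ₜ[k] ((τ i).left m * ((τ' zjn.1).left zjn.2 * h''))
                = ∑ w ∈ (π i).index, ∑ v ∈ (θ i m).index,
                    Tm (r (Sinv ((τ' zjn.1).right zjn.2)) (l (ρ'.left zjn.1) φ''))
                      ((τ' zjn.1).left zjn.2 * h'')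
                      ((π i).left w ⊗ₜ[k] ((π i).right w ⊗ₜ[k] ((τ i).left m ⊗ₜ[k]
                        ((θ i m).left v ⊗ₜ[k] (θ i m).right v)))) := by
              intro i _ m _
              rw [hlG (ρ.left i) φ' _ (π i).index (π i).left (π i).right (π i).eq.symm]
              rw [map_sum]
              rw [Finset.sum_congr rfl (fun w (_ : w ∈ (π i).index) =>
                hrG (Sinv ((τ i).right m)) _ _ (θ i m).index
                  (fun v => Sinv ((θ i m).right v)) (fun v => Sinv ((θ i m).left v))
                  (comul_Sinv_repr Sinv hSinv1 hSinv2 (θ i m)))]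
              rw [Finset.mul_sum, TensorProduct.sum_tmul]
              refine Finset.sum_congr rfl fun w _ => ?_
              rw [Finset.mul_sum, TensorProduct.sum_tmul]
              refine Finset.sum_congr rfl fun v _ => ?_
              rw [Tm_tmul]
            rw [Finset.sum_congr rfl (fun i hi => Finset.sum_congr rfl (inner i hi))]
            exact Finset.sum_congr rfl fun i _ => Finset.sum_comm
          rw [LHS_eq, rhs1, Finset.sum_congr rfl rhs2]
          refine Finset.sum_congr rfl fun zjn _ => ?_
          rw [← TR_eval (r (Sinv ((τ' zjn.1).right zjn.2)) (l (ρ'.left zjn.1) φ''))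
            ((τ' zjn.1).left zjn.2 * h'')]
          exact congrArg _ (coassoc5 ρ π τ σ κ θ)

  · -- left unit
    intro x
    induction x using TensorProduct.induction_on with
    | zero => simp
    | add u v hu hv => rw [map_add, hu, hv]
    | tmul φb hb =>
      have hrep : TensorProduct.map (LinearMap.id : H →ₗ[k] H) (Coalgebra.comul (R := k))
          (Coalgebra.comul (R := k) (1 : H))
          = ∑ _i ∈ ({0} : Finset ℕ), (1 : H) ⊗ₜ[k] ((1 : H) ⊗ₜ[k] (1 : H)) := by
        rw [Bialgebra.comul_one, Algebra.TensorProduct.one_def]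
        rw [TensorProduct.map_tmul, Bialgebra.comul_one, Algebra.TensorProduct.one_def]
        simp
      rw [hmulG (1 : A) φb (1 : H) hb ({0} : Finset ℕ) (fun _ => 1) (fun _ => 1) (fun _ => 1)
        hrep]
      rw [Finset.sum_singleton, Sinv_one Sinv hSinv1, hl_one, hr_one, one_mul, one_mul]
  · -- right unit
    intro x
    induction x using TensorProduct.induction_on with
    | zero => simp
    | add u v hu hv =>
      rw [map_add, LinearMap.add_apply, hu, hv]
    | tmul φa ha =>
      set ρ := Coalgebra.Repr.arbitrary k ha
      set τ : ∀ i : (H × H), Coalgebra.Repr k (ρ.right i) (H × H) := fun i => Coalgebra.Repr.arbitrary k _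
      rw [mulpure φa (1 : A) ha (1 : H) ρ τ]
      have inner : ∀ i ∈ ρ.index, ∑ m ∈ (τ i).index,
          (φa * r (Sinv ((τ i).right m)) (l (ρ.left i) (1 : A))) ⊗ₜ[k] ((τ i).left m * 1)
          = Coalgebra.counit (R := k) (ρ.left i) • (φa ⊗ₜ[k] ρ.right i) := by
        intro i _
        have : ∀ m ∈ (τ i).index,
            (φa * r (Sinv ((τ i).right m)) (l (ρ.left i) (1 : A))) ⊗ₜ[k] ((τ i).left m * 1)
            = Coalgebra.counit (R := k) (ρ.left i) •
                (Coalgebra.counit (R := k) ((τ i).right m) • (φa ⊗ₜ[k] (τ i).left m)) := by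
          intro m _
          rw [hl_unit, map_smul, hr_unit, counit_Sinv Sinv hSinv2]
          simp only [smul_smul, mul_smul_comm, mul_one, TensorProduct.smul_tmul']
        rw [Finset.sum_congr rfl this, ← Finset.smul_sum]
        congr 1
        calc ∑ m ∈ (τ i).index,
              Coalgebra.counit (R := k) ((τ i).right m) • (φa ⊗ₜ[k] (τ i).left m)
            = φa ⊗ₜ[k] (∑ m ∈ (τ i).index,
                Coalgebra.counit (R := k) ((τ i).right m) • (τ i).left m) := by
              rw [TensorProduct.tmul_sum]
              exact Finset.sum_congr rfl fun m _ => by rw [TensorProduct.tmul_smul]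
          _ = φa ⊗ₜ[k] ρ.right i := by rw [repr_counit_right (τ i)]
      rw [Finset.sum_congr rfl inner]
      calc ∑ i ∈ ρ.index, Coalgebra.counit (R := k) (ρ.left i) • (φa ⊗ₜ[k] ρ.right i)
          = φa ⊗ₜ[k] (∑ i ∈ ρ.index, Coalgebra.counit (R := k) (ρ.left i) • ρ.right i) := by
            rw [TensorProduct.tmul_sum]
            exact Finset.sum_congr rfl fun i _ => by rw [TensorProduct.tmul_smul]
        _ = φa ⊗ₜ[k] ha := by rw [repr_counit_left ρ]
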